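/- Let H be a δ-uniform hypergraph with N hyperedges, each intersecting at most d < 2^{δ/500} other hyperedges, and δ sufficiently large. Under an i.i.d. uniform 2-coloring of its vertices (with bias threshold δ/8), with probability at least 1/2 every connected 2,3-component of biased hyperedges has size at most log(2N)/(c·δ) for an absolute constant c > 0 (c ≈ 0.45). -/

import Mathlib

open scoped Classical

section Helpers

variable {α : Type*} [DecidableEq α]

private lemma chain_mem_of_restrict {R : α → α → Prop} {T : Finset α} :
    ∀ {l : List α} {v : α}, List.Chain (fun a b => R a b ∧ a ∈ T ∧ b ∈ T) v l →
      ∀ x ∈ l, x ∈ T := by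
  intro l
  induction l with
  | nil => intro v _ x hx; simp at hx
  | cons b t ih =>
    intro v h x hx
    simp only [List.Chain, List.chain_cons] at h
    rcases List.mem_cons.mp hx with rfl | hx
    · exact h.1.2.2
    · exact ih h.2 x hx

private lemma chain_restrict_erase {R : α → α → Prop} {T : Finset α} {u : α} :
    ∀ {l : List α} {v : α}, List.Chain (fun a b => R a b ∧ a ∈ T ∧ b ∈ T) v l →
      u ∉ l → v ∈ T.erase u →
      List.Chain (fun a b => R a b ∧ a ∈ T.erase u ∧ b ∈ T.erase u) v l := by
  intro l
  induction l with
  | nil => intro v _ _ _; exact List.Chain.nil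
  | cons b t ih =>
    intro v h hu hv
    simp only [List.Chain, List.chain_cons] at h ⊢
    have hb : b ∈ T.erase u :=
      Finset.mem_erase.mpr ⟨fun hbu => hu (hbu ▸ List.mem_cons_self), h.1.2.2⟩
    exact ⟨⟨h.1.1, hv, hb⟩, ih h.2 (fun hut => hu (List.mem_cons_of_mem b hut)) hb⟩

private lemma chain_take {R : α → α → Prop} :
    ∀ (l : List α) (v : α), List.Chain R v l → ∀ n, List.Chain R v (l.take n) := by
  intro l
  induction l with
  | nil => intro v h n; simpa using h
  | cons b t ih =>
    intro v h n
    simp only [List.Chain, List.chain_cons] at h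
    cases n with
    | zero => simp [List.Chain]
    | succ n => rw [List.take_succ_cons]; simp only [List.Chain, List.chain_cons]; exact ⟨h.1, ih b h.2 n⟩

private lemma chain_last_rel {R : α → α → Prop} :
    ∀ (l : List α) (a b : α), List.Chain R a (l ++ [b]) →
      R ((a :: l).getLast (List.cons_ne_nil a l)) b := by
  intro l
  induction l with
  | nil => intro a b h; rw [List.nil_append] at h; simp only [List.Chain, List.chain_cons] at h; simpa using h.1
  | cons c t ih =>
    intro a b h
    rw [List.cons_append] at h; simp only [List.Chain, List.chain_cons] at h
    have := ih c b h.2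
    rwa [List.getLast_cons_cons]

private lemma exists_traversal {R : α → α → Prop} (hsym : ∀ a b, R a b → R b a) :
    ∀ (n : ℕ) (T : Finset α) (v : α), T.card ≤ n + 1 → v ∈ T →
      (∀ y ∈ T, Relation.ReflTransGen (fun a b => R a b ∧ a ∈ T ∧ b ∈ T) v y) →
      ∃ l : List α, l.head? = some v ∧ l.Chain' R ∧ l.toFinset = T ∧
        l.length ≤ 2 * T.card - 1 := by
  intro n
  induction n with
  | zero =>
    intro T v hcard hv _
    have h1 := Finset.card_le_one.mp hcard
    have hT : T = {v} := Finset.eq_singleton_iff_unique_mem.mpr ⟨hv, fun y hy => h1 y hy v hv⟩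
    exact ⟨[v], rfl, List.isChain_singleton v, by simp [hT], by simp [hT]⟩
  | succ n ih =>
    intro T v hcard hv hconn
    have hexd : ∀ y ∈ T, ∃ m : ℕ, ∃ l : List α, l.length = m ∧
        List.Chain (fun a b => R a b ∧ a ∈ T ∧ b ∈ T) v l ∧
        (v :: l).getLast (List.cons_ne_nil v l) = y := by
      intro y hy
      obtain ⟨l, h1, h2⟩ := List.exists_isChain_cons_of_relationReflTransGen (hconn y hy)
      exact ⟨l.length, l, rfl, h1, h2⟩
    set dist : α → ℕ := fun y => if h : ∃ m : ℕ, ∃ l : List α, l.length = m ∧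
        List.Chain (fun a b => R a b ∧ a ∈ T ∧ b ∈ T) v l ∧
        (v :: l).getLast (List.cons_ne_nil v l) = y then Nat.find h else 0 with hdistdef
    have dist_spec : ∀ y ∈ T, ∃ l : List α, l.length = dist y ∧
        List.Chain (fun a b => R a b ∧ a ∈ T ∧ b ∈ T) v l ∧
        (v :: l).getLast (List.cons_ne_nil v l) = y := by
      intro y hy
      have h := hexd y hy
      simp only [hdistdef, dif_pos h]
      exact Nat.find_spec h
    have dist_min : ∀ y ∈ T, ∀ (l : List α),
        List.Chain (fun a b => R a b ∧ a ∈ T ∧ b ∈ T) v l →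
        (v :: l).getLast (List.cons_ne_nil v l) = y → dist y ≤ l.length := by
      intro y hy l hc hg
      have h := hexd y hy
      simp only [hdistdef, dif_pos h]
      exact Nat.find_le ⟨l, rfl, hc, hg⟩
    have hdv : dist v = 0 :=
      Nat.le_zero.mp (by simpa using dist_min v hv [] List.Chain.nil (by simp))
    obtain ⟨u, hu, hmax⟩ := T.exists_max_image dist ⟨v, hv⟩
    by_cases hu0 : dist u = 0
    · -- all distances zero: T = {v}
      have hT : T = {v} := by
        apply Finset.eq_singleton_iff_unique_mem.mpr ⟨hv, fun y hy => ?_⟩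
        obtain ⟨l, hl, _, hg⟩ := dist_spec y hy
        have h0 : dist y = 0 := Nat.le_zero.mp (hu0 ▸ hmax y hy)
        rw [h0] at hl
        rw [List.length_eq_zero_iff.mp hl] at hg
        simpa using hg.symm
      exact ⟨[v], rfl, List.isChain_singleton v, by simp [hT], by simp [hT]⟩
    · have huv : u ≠ v := fun h => hu0 (h ▸ hdv)
      have hvT' : v ∈ T.erase u := Finset.mem_erase.mpr ⟨fun h => huv h.symm, hv⟩
      -- minimal chains to points other than u avoid u
      have key : ∀ y ∈ T, y ≠ u → ∃ l : List α,
          List.Chain (fun a b => R a b ∧ a ∈ T ∧ b ∈ T) v l ∧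
          (v :: l).getLast (List.cons_ne_nil v l) = y ∧ u ∉ l := by
        intro y hy hyu
        obtain ⟨l, hlen, hc, hg⟩ := dist_spec y hy
        refine ⟨l, hc, hg, fun hul => ?_⟩
        obtain ⟨q, hq, hlq⟩ := List.getElem_of_mem hul
        have hlne : l ≠ [] := List.ne_nil_of_mem hul
        by_cases hqlast : q + 1 = l.length
        · -- then u is the last element, i.e. y = u
          apply hyu
          rw [← hg, List.getLast_cons hlne, List.getLast_eq_getElem, ← hlq]
          exact (getElem_congr_idx (by omega)).symm
        · -- proper prefix reaches u faster
          have hql : q + 1 < l.length := by omega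
          have hc1 : List.Chain (fun a b => R a b ∧ a ∈ T ∧ b ∈ T) v (l.take (q + 1)) :=
            chain_take l v hc (q + 1)
          have htne : l.take (q + 1) ≠ [] := by
            apply List.ne_nil_of_length_pos
            rw [List.length_take]; omega
          have hgl : (v :: l.take (q + 1)).getLast (List.cons_ne_nil _ _) = u := by
            rw [List.getLast_cons htne, List.getLast_eq_getElem, ← hlq]
            rw [List.getElem_take]
            apply getElem_congr_idx
            rw [List.length_take]; omega
          have := dist_min u hu _ hc1 hgl
          rw [List.length_take] at this
          have hdyu := hmax y hy
          omega
      -- connectivity of T.erase u from v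
      have hconn' : ∀ y ∈ T.erase u,
          Relation.ReflTransGen (fun a b => R a b ∧ a ∈ T.erase u ∧ b ∈ T.erase u) v y := by
        intro y hy
        obtain ⟨hyne, hyT⟩ := Finset.mem_erase.mp hy
        obtain ⟨l, hc, hg, hul⟩ := key y hyT hyne
        exact List.relationReflTransGen_of_exists_isChain_cons l
          (chain_restrict_erase hc hul hvT') hg
      have hcard' : (T.erase u).card ≤ n + 1 := by
        rw [Finset.card_erase_of_mem hu]; omega
      obtain ⟨l', hh, hch, htf, hlen⟩ := ih (T.erase u) v hcard' hvT' hconn'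
      -- find an attachment point t ∈ T.erase u with R t u
      obtain ⟨lu, hlulen, hluc, hlug⟩ := dist_spec u hu
      have hlune : lu ≠ [] := by
        intro h
        apply hu0
        rw [h] at hlulen
        simpa using hlulen.symm
      have hlulast : lu.getLast hlune = u := by
        rw [← hlug, List.getLast_cons hlune]
      have hluc' : List.Chain (fun a b => R a b ∧ a ∈ T ∧ b ∈ T) v (lu.dropLast ++ [u]) := by
        rw [← hlulast, List.dropLast_append_getLast hlune]; exact hluc
      set t := (v :: lu.dropLast).getLast (List.cons_ne_nil _ _) with htdef
      have hRtu : R t u ∧ t ∈ T ∧ u ∈ T := chain_last_rel _ v u hluc'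
      have htu : t ≠ u := by
        intro h
        have hcd : List.Chain (fun a b => R a b ∧ a ∈ T ∧ b ∈ T) v lu.dropLast := by
          have := chain_take lu v hluc (lu.length - 1)
          rwa [← List.dropLast_eq_take] at this
        have := dist_min u hu lu.dropLast hcd (by rw [← htdef]; exact h)
        rw [List.length_dropLast] at this
        have hlp : 0 < lu.length := List.length_pos_iff.mpr hlune
        omega
      have htT' : t ∈ T.erase u := Finset.mem_erase.mpr ⟨htu, hRtu.2.1⟩
      have htl' : t ∈ l' := by rw [← List.mem_toFinset, htf]; exact htT'
      obtain ⟨s, r, rfl⟩ := List.append_of_mem htl'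
      -- splice in a detour t-u-t
      refine ⟨s ++ t :: u :: t :: r, ?_, ?_, ?_, ?_⟩
      · cases s with
        | nil => simpa using hh
        | cons a s' => simpa using hh
      · simp only [List.Chain'] at hch ⊢; rw [List.isChain_split] at hch ⊢
        refine ⟨hch.1, ?_⟩
        rw [List.isChain_cons_cons, List.isChain_cons_cons]
        exact ⟨hRtu.1, hsym t u hRtu.1, hch.2⟩
      · have : (s ++ t :: u :: t :: r).toFinset = insert u ((s ++ t :: r).toFinset) := by
          ext a
          simp only [List.toFinset_append, List.toFinset_cons, Finset.mem_union,
            Finset.mem_insert, List.mem_toFinset]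
          tauto
        rw [this, htf, Finset.insert_erase hu]
      · have hT2 : 2 ≤ T.card := Finset.one_lt_card.mpr ⟨u, hu, v, hv, huv⟩
        have hTe : (T.erase u).card = T.card - 1 := Finset.card_erase_of_mem hu
        simp only [List.length_append, List.length_cons] at hlen ⊢
        omega

end Helpers

private lemma reach_of_windows {A : α → α → Prop} {T : Finset α} {R3 : α → α → Prop}
    (hR3 : ∀ a b, a ≠ b →
      (A a b ∨ (∃ u, A a u ∧ A u b) ∨ ∃ u w, A a u ∧ A u w ∧ A w b) → R3 a b) :
    ∀ (n : ℕ) (l : List α) (hpos : 0 < l.length), l.length ≤ n →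
      List.Chain' A l → l[0]'hpos ∈ T → (l[l.length - 1]'(by omega) ∈ T) →
      (∀ i, (h : i + 2 < l.length) → l[i] ∈ T ∨ l[i+1] ∈ T ∨ l[i+2] ∈ T) →
      Relation.ReflTransGen (fun a b => R3 a b ∧ a ∈ T ∧ b ∈ T)
        (l[0]'hpos) (l[l.length - 1]'(by omega)) := by
  intro n
  induction n with
  | zero => intro l hpos hlen; omega
  | succ n ih =>
    intro l hpos hlen hch h0 hlast hwin
    by_cases h1 : l.length = 1
    · have : l[l.length - 1]'(by omega) = l[0]'hpos := getElem_congr_idx (by omega)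
      rw [this]
    · have hge2 : 2 ≤ l.length := by omega
      have hadj : ∀ i (h : i + 1 < l.length), A (l[i]'(by omega)) (l[i+1]'h) := by
        intro i hi
        have := List.isChain_iff_getElem.mp hch i (by omega)
        simpa [List.get_eq_getElem] using this
      have hex : ∃ p, ∃ hp : p < l.length, 1 ≤ p ∧ p ≤ 3 ∧ l[p]'hp ∈ T := by
        by_cases hl2 : l.length = 2
        · refine ⟨1, by omega, le_refl 1, by omega, ?_⟩
          rw [getElem_congr_idx (show l.length - 1 = 1 by omega)] at hlast
          exact hlast
        · by_cases hl3 : l.length = 3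
          · refine ⟨2, by omega, by omega, by omega, ?_⟩
            rw [getElem_congr_idx (show l.length - 1 = 2 by omega)] at hlast
            exact hlast
          · by_cases ht1 : l[1]'(by omega) ∈ T
            · exact ⟨1, by omega, by omega, by omega, ht1⟩
            · by_cases ht2 : l[2]'(by omega) ∈ T
              · exact ⟨2, by omega, by omega, by omega, ht2⟩
              · rcases hwin 1 (by omega) with h | h | h
                · exact absurd h ht1
                · exact absurd h ht2
                · exact ⟨3, by omega, by omega, le_refl 3, h⟩
      obtain ⟨p, hp, hp1, hp3, hpT⟩ := hex
      have hfirst : Relation.ReflTransGen (fun a b => R3 a b ∧ a ∈ T ∧ b ∈ T)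
          (l[0]'hpos) (l[p]'hp) := by
        by_cases hxz : l[0]'hpos = l[p]'hp
        · rw [hxz]
        · refine Relation.ReflTransGen.single ⟨hR3 _ _ hxz ?_, h0, hpT⟩
          interval_cases p
          · exact Or.inl (hadj 0 (by omega))
          · exact Or.inr (Or.inl ⟨l[1]'(by omega), hadj 0 (by omega), hadj 1 (by omega)⟩)
          · exact Or.inr (Or.inr ⟨l[1]'(by omega), l[2]'(by omega),
              hadj 0 (by omega), hadj 1 (by omega), hadj 2 (by omega)⟩)
      have hdpos : 0 < (l.drop p).length := by rw [List.length_drop]; omega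
      have hdlen : (l.drop p).length ≤ n := by rw [List.length_drop]; omega
      have e0 : (l.drop p)[0]'hdpos = l[p]'hp := by
        rw [List.getElem_drop]
        exact getElem_congr_idx (Nat.add_zero p)
      have elast : (l.drop p)[(l.drop p).length - 1]'(by omega) = l[l.length - 1]'(by omega) := by
        rw [List.getElem_drop]
        apply getElem_congr_idx
        rw [List.length_drop]; omega
      have hwins : ∀ i, (h : i + 2 < (l.drop p).length) →
          (l.drop p)[i] ∈ T ∨ (l.drop p)[i+1] ∈ T ∨ (l.drop p)[i+2] ∈ T := by
        intro i h
        have hlt : p + i + 2 < l.length := by rw [List.length_drop] at h; omega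
        have := hwin (p + i) hlt
        simpa only [List.getElem_drop, Nat.add_assoc] using this
      have hrec := ih (l.drop p) hdpos hdlen (List.IsChain.drop hch p) (e0 ▸ hpT) (elast ▸ hlast) hwins
      rw [e0, elast] at hrec
      exact hfirst.trans hrec



/-- The binary entropy function. -/
noncomputable def binEnt (x : ℝ) : ℝ := -x * Real.logb 2 x - (1 - x) * Real.logb 2 (1 - x)

/-- The intersection graph of a hypergraph given by hyperedges `E i`:
two hyperedges are adjacent iff they are distinct and intersect. -/
def interGraph {V : Type} [DecidableEq V] {N : ℕ} (E : Fin N → Finset V) :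
    SimpleGraph (Fin N) where
  Adj i j := i ≠ j ∧ ¬ Disjoint (E i) (E j)
  symm := by
    constructor
    rintro i j ⟨h1, h2⟩
    exact ⟨h1.symm, fun hd => h2 hd.symm⟩
  loopless := by constructor; rintro i ⟨h1, _⟩; exact h1 rfl

/-- `T` is a connected 2,3-component: its hyperedges are pairwise disjoint and any two
members are joined by a walk in the intersection graph in which among any three
consecutive hyperedges at least one belongs to `T`. -/
def IsConn23 {V : Type} [DecidableEq V] {N : ℕ} (E : Fin N → Finset V)
    (T : Finset (Fin N)) : Prop :=
  (∀ x ∈ T, ∀ y ∈ T, x ≠ y → Disjoint (E x) (E y)) ∧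
  ∀ x ∈ T, ∀ y ∈ T, ∃ w : (interGraph E).Walk x y,
    ∀ i : ℕ, (h : i + 2 < w.support.length) →
      w.support[i] ∈ T ∨ w.support[i+1] ∈ T ∨ w.support[i+2] ∈ T

/-- A hyperedge `f` is biased under coloring `c` if it has at most `δ/8` red (`true`)
vertices or at most `δ/8` blue (`false`) vertices. -/
def Biased18 {V : Type} [DecidableEq V] (δ : ℕ) (c : V → Bool) (f : Finset V) : Prop :=
  ((f.filter fun v => c v = true).card : ℝ) ≤ (δ : ℝ) / 8 ∨
  ((f.filter fun v => c v = false).card : ℝ) ≤ (δ : ℝ) / 8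

section Graph

variable {V : Type} [DecidableEq V] {N : ℕ}

/-- distance-≤3 adjacency -/
private def Adj3 (E : Fin N → Finset V) (a b : Fin N) : Prop :=
  a ≠ b ∧ ((interGraph E).Adj a b ∨ (∃ u, (interGraph E).Adj a u ∧ (interGraph E).Adj u b) ∨
    ∃ u w, (interGraph E).Adj a u ∧ (interGraph E).Adj u w ∧ (interGraph E).Adj w b)

private lemma adj3_symm (E : Fin N → Finset V) (a b : Fin N) (h : Adj3 E a b) : Adj3 E b a := by
  obtain ⟨hne, h⟩ := h
  refine ⟨hne.symm, ?_⟩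
  rcases h with h | ⟨u, h1, h2⟩ | ⟨u, w, h1, h2, h3⟩
  · exact Or.inl h.symm
  · exact Or.inr (Or.inl ⟨u, h2.symm, h1.symm⟩)
  · exact Or.inr (Or.inr ⟨w, u, h3.symm, h2.symm, h1.symm⟩)

private lemma conn23_reach (E : Fin N → Finset V) {T : Finset (Fin N)} (hT : IsConn23 E T) :
    ∀ x ∈ T, ∀ y ∈ T,
      Relation.ReflTransGen (fun a b => Adj3 E a b ∧ a ∈ T ∧ b ∈ T) x y := by
  intro x hx y hy
  obtain ⟨w, hwin⟩ := hT.2 x hx y hy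
  have hpos : 0 < w.support.length := List.length_pos_iff.mpr w.support_ne_nil
  have h0 : w.support[0]'hpos = x := by
    rw [List.getElem_zero]; exact w.head_support
  have hlast : w.support[w.support.length - 1]'(by omega) = y := by
    have := w.getLast_support
    rwa [List.getLast_eq_getElem] at this
  have := reach_of_windows (A := (interGraph E).Adj) (T := T) (R3 := Adj3 E)
    (fun a b hne h => ⟨hne, h⟩) w.support.length w.support hpos le_rfl
    w.isChain_adj_support (by rw [h0]; exact hx) (by rw [hlast]; exact hy) hwin
  rwa [h0, hlast] at this

end Graph

section Counting

open Finset

private lemma card_chainFn {N : ℕ} (R : Fin N → Fin N → Prop) (D : ℕ)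
    (hD : ∀ i : Fin N, (Finset.univ.filter fun j => R i j).card ≤ D) :
    ∀ n : ℕ, (Finset.univ.filter fun g : Fin (n+1) → Fin N =>
        ∀ i : Fin n, R (g i.castSucc) (g i.succ)).card ≤ N * D ^ n := by
  intro n
  induction n with
  | zero =>
    calc (Finset.univ.filter fun g : Fin 1 → Fin N => ∀ i : Fin 0, R (g i.castSucc) (g i.succ)).card
        ≤ (Finset.univ : Finset (Fin 1 → Fin N)).card := Finset.card_filter_le _ _
      _ = N * D ^ 0 := by simp [Finset.card_univ]
  | succ n ih =>
    set s := Finset.univ.filter fun g : Fin (n+2) → Fin N =>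
        ∀ i : Fin (n+1), R (g i.castSucc) (g i.succ) with hs
    have hsub : s.image (fun g => g ∘ Fin.castSucc) ⊆
        Finset.univ.filter fun g : Fin (n+1) → Fin N =>
          ∀ i : Fin n, R (g i.castSucc) (g i.succ) := by
      intro g₀ hg₀
      obtain ⟨g, hg, rfl⟩ := Finset.mem_image.mp hg₀
      rw [hs, Finset.mem_filter] at hg
      refine Finset.mem_filter.mpr ⟨Finset.mem_univ _, fun i => ?_⟩
      have := hg.2 i.castSucc
      simpa only [Function.comp_apply, Fin.succ_castSucc] using this
    have hfib : ∀ g₀ ∈ s.image (fun g => g ∘ Fin.castSucc),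
        (s.filter fun g => g ∘ Fin.castSucc = g₀).card ≤ D := by
      intro g₀ _
      refine le_trans (Finset.card_le_card_of_injOn (fun g => g (Fin.last (n+1)))
        (fun g hg => ?_) (fun g hg g' hg' hee => ?_)) (hD (g₀ (Fin.last n)))
      · rw [Finset.mem_coe, Finset.mem_filter] at hg
        obtain ⟨hgs, hgi⟩ := hg
        rw [hs, Finset.mem_filter] at hgs
        refine Finset.mem_filter.mpr ⟨Finset.mem_univ _, ?_⟩
        have := hgs.2 (Fin.last n)
        rw [Fin.succ_last] at this
        have he : g ((Fin.last n).castSucc) = g₀ (Fin.last n) := by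
          rw [← hgi]; rfl
        rwa [he] at this
      · rw [Finset.mem_coe, Finset.mem_filter] at hg hg'
        funext x
        induction x using Fin.lastCases with
        | last => exact hee
        | cast i =>
          have := congrFun (hg.2.trans hg'.2.symm) i
          simpa using this
    calc s.card ≤ D * (s.image (fun g => g ∘ Fin.castSucc)).card :=
          Finset.card_le_mul_card_image _ D hfib
      _ ≤ D * (N * D ^ n) := by
          exact Nat.mul_le_mul_left D (le_trans (Finset.card_le_card hsub) ih)
      _ = N * D ^ (n+1) := by ring

private lemma adj3_degree {V : Type} [DecidableEq V] {N d : ℕ} (E : Fin N → Finset V)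
    (hdeg : ∀ i : Fin N, Nat.card {j : Fin N // j ≠ i ∧ ¬ Disjoint (E i) (E j)} ≤ d) :
    ∀ i : Fin N, (Finset.univ.filter fun j => Adj3 E i j).card ≤ d + d * d + d * (d * d) := by
  intro i
  have hNb : ∀ u : Fin N, (Finset.univ.filter fun j => (interGraph E).Adj u j).card ≤ d := by
    intro u
    have := hdeg u
    rw [Nat.card_eq_fintype_card, Fintype.card_subtype] at this
    have heq : (Finset.univ.filter fun j => (interGraph E).Adj u j)
        = Finset.univ.filter fun j => j ≠ u ∧ ¬ Disjoint (E u) (E j) := by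
      apply Finset.filter_congr
      intro x _
      exact Iff.intro (fun h => ⟨h.1.symm, h.2⟩) (fun h => ⟨h.1.symm, h.2⟩)
    rw [heq]
    exact this
  set N1 := Finset.univ.filter fun j => (interGraph E).Adj i j with hN1
  set N2 := N1.biUnion (fun u => Finset.univ.filter fun j => (interGraph E).Adj u j) with hN2
  set N3 := N2.biUnion (fun u => Finset.univ.filter fun j => (interGraph E).Adj u j) with hN3
  have hc1 : N1.card ≤ d := hNb i
  have hc2 : N2.card ≤ d * d := by
    calc N2.card ≤ ∑ u ∈ N1, (Finset.univ.filter fun j => (interGraph E).Adj u j).card :=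
          Finset.card_biUnion_le
      _ ≤ ∑ _u ∈ N1, d := Finset.sum_le_sum (fun u _ => hNb u)
      _ = N1.card * d := by rw [Finset.sum_const, smul_eq_mul]
      _ ≤ d * d := Nat.mul_le_mul_right d hc1
  have hc3 : N3.card ≤ d * d * d := by
    calc N3.card ≤ ∑ u ∈ N2, (Finset.univ.filter fun j => (interGraph E).Adj u j).card :=
          Finset.card_biUnion_le
      _ ≤ ∑ _u ∈ N2, d := Finset.sum_le_sum (fun u _ => hNb u)
      _ = N2.card * d := by rw [Finset.sum_const, smul_eq_mul]
      _ ≤ d * d * d := Nat.mul_le_mul_right d hc2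
  have hsub : (Finset.univ.filter fun j => Adj3 E i j) ⊆ N1 ∪ N2 ∪ N3 := by
    intro j hj
    rw [Finset.mem_filter] at hj
    obtain ⟨-, -, h⟩ := hj
    rcases h with h | ⟨u, h1, h2⟩ | ⟨u, w, h1, h2, h3⟩
    · exact Finset.mem_union_left _ (Finset.mem_union_left _
        (Finset.mem_filter.mpr ⟨Finset.mem_univ _, h⟩))
    · refine Finset.mem_union_left _ (Finset.mem_union_right _ ?_)
      exact Finset.mem_biUnion.mpr ⟨u, Finset.mem_filter.mpr ⟨Finset.mem_univ _, h1⟩,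
        Finset.mem_filter.mpr ⟨Finset.mem_univ _, h2⟩⟩
    · refine Finset.mem_union_right _ ?_
      refine Finset.mem_biUnion.mpr ⟨w, ?_, Finset.mem_filter.mpr ⟨Finset.mem_univ _, h3⟩⟩
      exact Finset.mem_biUnion.mpr ⟨u, Finset.mem_filter.mpr ⟨Finset.mem_univ _, h1⟩,
        Finset.mem_filter.mpr ⟨Finset.mem_univ _, h2⟩⟩
  calc (Finset.univ.filter fun j => Adj3 E i j).card ≤ (N1 ∪ N2 ∪ N3).card :=
        Finset.card_le_card hsub
    _ ≤ N1.card + N2.card + N3.card :=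
        le_trans (Finset.card_union_le _ _) (by
          have := Finset.card_union_le N1 N2
          omega)
    _ ≤ d + d * d + d * (d * d) := by
        have : d * d * d = d * (d * d) := by ring
        omega

private lemma sum_pow_le (D M : ℕ) : ∑ n ∈ Finset.range M, D ^ n ≤ (D + 1) ^ M := by
  induction M with
  | zero => simp
  | succ M ih =>
    rw [Finset.sum_range_succ']
    have h1 : ∑ i ∈ Finset.range M, D ^ (i + 1) = (∑ i ∈ Finset.range M, D ^ i) * D := by
      rw [Finset.sum_mul]
      exact Finset.sum_congr rfl (fun i _ => by ring)
    rw [h1, pow_succ]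
    have h2 : 1 ≤ (D + 1) ^ M := Nat.one_le_pow M (D + 1) (by omega)
    have h3 : (∑ i ∈ Finset.range M, D ^ i) * D ≤ (D + 1) ^ M * D :=
      Nat.mul_le_mul_right D ih
    nlinarith

end Counting

section ConnCount

private lemma card_conn_le {N : ℕ} {R3 : Fin N → Fin N → Prop}
    (hsym : ∀ a b, R3 a b → R3 b a)
    (P : Finset (Fin N) → Prop)
    (hP : ∀ T, P T → T.Nonempty → ∃ v ∈ T, ∀ y ∈ T,
      Relation.ReflTransGen (fun a b => R3 a b ∧ a ∈ T ∧ b ∈ T) v y)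
    (D : ℕ) (hD : ∀ i : Fin N, (Finset.univ.filter fun j => R3 i j).card ≤ D)
    (k : ℕ) (hk : 1 ≤ k) :
    ((Finset.univ : Finset (Finset (Fin N))).filter fun T => P T ∧ T.card = k).card
      ≤ N * (D + 1) ^ (2 * k - 1) := by
  rcases Nat.eq_zero_or_pos N with hN | hN
  · subst hN
    have : ((Finset.univ : Finset (Finset (Fin 0))).filter fun T => P T ∧ T.card = k) = ∅ := by
      apply Finset.filter_eq_empty_iff.mpr
      intro T _
      rintro ⟨-, hcard⟩
      have hTe : T = ∅ := Finset.eq_empty_of_forall_notMem (fun x _ => x.elim0)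
      rw [hTe] at hcard
      simp at hcard
      omega
    rw [this]
    simp
  · set s := (Finset.univ : Finset (Finset (Fin N))).filter fun T => P T ∧ T.card = k with hsdef
    have hstep : ∀ T ∈ s, ∃ (n : ℕ) (g : Fin (n+1) → Fin N), n < 2*k-1 ∧
        (∀ i : Fin n, R3 (g i.castSucc) (g i.succ)) ∧ T = Finset.image g Finset.univ := by
      intro T hT
      rw [hsdef, Finset.mem_filter] at hT
      obtain ⟨-, hPT, hcard⟩ := hT
      obtain ⟨v, hv, hconn⟩ := hP T hPT (Finset.card_pos.mp (by omega))
      obtain ⟨l, hh, hch, htf, hlen⟩ := exists_traversal hsym k T v (by omega) hv hconn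
      have hlne : l ≠ [] := by intro h; rw [h] at hh; simp at hh
      have hlpos : 0 < l.length := List.length_pos_iff.mpr hlne
      rw [hcard] at hlen
      refine ⟨l.length - 1, fun j => l[(j : ℕ)]'(by omega), by omega, fun i => ?_, ?_⟩
      · have := List.isChain_iff_getElem.mp hch (i : ℕ) (by omega)
        simpa [List.get_eq_getElem, Fin.coe_castSucc, Fin.val_succ] using this
      · rw [← htf]
        ext x
        simp only [List.mem_toFinset, Finset.mem_image, Finset.mem_univ, true_and]
        rw [List.mem_iff_getElem]
        constructor
        · rintro ⟨i, hi, rfl⟩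
          exact ⟨⟨i, by omega⟩, rfl⟩
        · rintro ⟨j, rfl⟩
          exact ⟨(j : ℕ), by omega, rfl⟩
    choose nf gf hlt hchain himg using hstep
    set target := (Finset.range (2*k-1)).sigma (fun n =>
      Finset.univ.filter fun g : Fin (n+1) → Fin N =>
        ∀ i : Fin n, R3 (g i.castSucc) (g i.succ)) with htgt
    have hmain : s.card ≤ target.card := by
      apply Finset.card_le_card_of_injOn
        (fun T => if h : T ∈ s then ⟨nf T h, gf T h⟩ else ⟨0, fun _ => ⟨0, hN⟩⟩)
      · intro T hT
        rw [Finset.mem_coe] at hT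
        simp only [dif_pos hT]
        exact Finset.mem_sigma.mpr ⟨Finset.mem_range.mpr (hlt T hT),
          Finset.mem_filter.mpr ⟨Finset.mem_univ _, hchain T hT⟩⟩
      · intro T hT T' hT' hee
        rw [Finset.mem_coe] at hT hT'
        dsimp only at hee
        rw [dif_pos hT, dif_pos hT'] at hee
        have himgeq : ∀ (x y : (n : ℕ) × (Fin (n+1) → Fin N)), x = y →
            Finset.image x.2 Finset.univ = Finset.image y.2 Finset.univ := by
          rintro x y rfl; rfl
        rw [himg T hT, himg T' hT']
        exact himgeq _ _ hee
    have htcard : target.card ≤ N * (D + 1) ^ (2*k-1) := by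
      rw [htgt, Finset.card_sigma]
      calc ∑ n ∈ Finset.range (2*k-1), (Finset.univ.filter fun g : Fin (n+1) → Fin N =>
            ∀ i : Fin n, R3 (g i.castSucc) (g i.succ)).card
          ≤ ∑ n ∈ Finset.range (2*k-1), N * D ^ n :=
            Finset.sum_le_sum (fun n _ => card_chainFn R3 D hD n)
        _ = N * ∑ n ∈ Finset.range (2*k-1), D ^ n := by rw [Finset.mul_sum]
        _ ≤ N * (D + 1) ^ (2*k-1) := Nat.mul_le_mul_left N (sum_pow_le D (2*k-1))
    omega

private lemma card_conn23_le {V : Type} [DecidableEq V] {N d k : ℕ} (E : Fin N → Finset V)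
    (hdeg : ∀ i : Fin N, Nat.card {j : Fin N // j ≠ i ∧ ¬ Disjoint (E i) (E j)} ≤ d)
    (Q : Finset (Fin N) → Prop) (hk : 1 ≤ k) :
    ((Finset.univ : Finset (Finset (Fin N))).filter
        fun T => (IsConn23 E T ∧ Q T) ∧ T.card = k).card
      ≤ N * (d + 1) ^ (6 * k) := by
  have h1 := card_conn_le (R3 := Adj3 E) (adj3_symm E)
    (fun T => IsConn23 E T ∧ Q T)
    (fun T hPT hne => by
      obtain ⟨v, hv⟩ := hne
      exact ⟨v, hv, fun y hy => conn23_reach E hPT.1 v hv y hy⟩)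
    (d + d * d + d * (d * d)) (adj3_degree E hdeg) k hk
  have h1' : ((Finset.univ : Finset (Finset (Fin N))).filter
      fun T => (IsConn23 E T ∧ Q T) ∧ T.card = k).card
      ≤ N * (d + d * d + d * (d * d) + 1) ^ (2 * k - 1) := by
    convert h1 using 2
    exact Finset.ext (fun T => by simp only [Finset.mem_filter])
  refine le_trans h1' (Nat.mul_le_mul_left N ?_)
  have h2 : d + d * d + d * (d * d) + 1 ≤ (d + 1) ^ 3 := by nlinarith [sq_nonneg d]
  calc (d + d * d + d * (d * d) + 1) ^ (2 * k - 1)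
      ≤ ((d + 1) ^ 3) ^ (2 * k - 1) := Nat.pow_le_pow_left h2 _
    _ = (d + 1) ^ (3 * (2 * k - 1)) := by rw [← pow_mul]
    _ ≤ (d + 1) ^ (6 * k) := Nat.pow_le_pow_right (by omega) (by omega)

end ConnCount

section Coloring

variable {V : Type} [Fintype V] [DecidableEq V]

private lemma card_forced (f : Finset V) (b : Bool) :
    (Finset.univ.filter fun c : V → Bool => ∀ v ∈ f, c v = b).card
      = 2 ^ (Fintype.card V - f.card) := by
  have h1 : (Finset.univ.filter fun c : V → Bool => ∀ v ∈ f, c v = b).card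
      = Fintype.card {c : V → Bool // ∀ v ∈ f, c v = b} := by
    rw [Fintype.card_subtype]
  rw [h1]
  have e : {c : V → Bool // ∀ v ∈ f, c v = b} ≃ ({v : V // v ∉ f} → Bool) :=
    { toFun := fun c v => c.1 v.1
      invFun := fun g => ⟨fun v => if h : v ∈ f then b else g ⟨v, h⟩, fun v hv => by simp [hv]⟩
      left_inv := fun c => by
        ext v
        by_cases h : v ∈ f
        · simp [h, c.2 v h]
        · simp [h]
      right_inv := fun g => by
        funext v
        simp [v.2] }
  rw [Fintype.card_congr e, Fintype.card_fun, Fintype.card_bool,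
    Fintype.card_subtype_compl, Fintype.card_coe]

private lemma bool_eq_not_of_ne {x y : Bool} (h : x ≠ y) : x = !y := by
  cases x <;> cases y <;> simp_all

private lemma card_biasedSide_le (f : Finset V) (b : Bool) (m : ℕ) :
    (Finset.univ.filter fun c : V → Bool => (f.filter fun v => c v = b).card ≤ m).card
      ≤ (∑ i ∈ Finset.range (m+1), (f.card).choose i) * 2 ^ (Fintype.card V - f.card) := by
  classical
  set s := Finset.univ.filter fun c : V → Bool => (f.filter fun v => c v = b).card ≤ m with hs
  set S := f.powerset.filter fun t => t.card ≤ m with hS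
  have hmap : ∀ c ∈ s, (f.filter fun v => c v = b) ∈ S := by
    intro c hc
    rw [hs, Finset.mem_filter] at hc
    exact Finset.mem_filter.mpr ⟨Finset.mem_powerset.mpr (Finset.filter_subset _ _), hc.2⟩
  rw [Finset.card_eq_sum_card_fiberwise hmap]
  have hfib : ∀ t ∈ S, (s.filter fun c => (f.filter fun v => c v = b) = t).card
      ≤ 2 ^ (Fintype.card V - f.card) := by
    intro t ht
    rw [← card_forced f (!b)]
    apply Finset.card_le_card_of_injOn (fun c v => if v ∈ f then !b else c v)
    · intro c _
      refine Finset.mem_filter.mpr ⟨Finset.mem_univ _, fun v hv => ?_⟩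
      simp [hv]
    · intro c hc c' hc' hee
      rw [Finset.mem_coe, Finset.mem_filter] at hc hc'
      funext v
      by_cases hvf : v ∈ f
      · by_cases hvt : v ∈ t
        · have h1 : v ∈ f.filter fun v => c v = b := hc.2 ▸ hvt
          have h2 : v ∈ f.filter fun v => c' v = b := hc'.2 ▸ hvt
          rw [Finset.mem_filter] at h1 h2
          rw [h1.2, h2.2]
        · have h1 : v ∉ f.filter fun v => c v = b := hc.2 ▸ hvt
          have h2 : v ∉ f.filter fun v => c' v = b := hc'.2 ▸ hvt
          rw [Finset.mem_filter] at h1 h2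
          push_neg at h1 h2
          rw [bool_eq_not_of_ne (h1 hvf), bool_eq_not_of_ne (h2 hvf)]
      · have := congrFun hee v
        simpa [hvf] using this
  calc ∑ t ∈ S, (s.filter fun c => (f.filter fun v => c v = b) = t).card
      ≤ ∑ _t ∈ S, 2 ^ (Fintype.card V - f.card) := Finset.sum_le_sum hfib
    _ = S.card * 2 ^ (Fintype.card V - f.card) := by rw [Finset.sum_const, smul_eq_mul]
    _ ≤ (∑ i ∈ Finset.range (m+1), (f.card).choose i) * 2 ^ (Fintype.card V - f.card) := by
        apply Nat.mul_le_mul_right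
        have hmap2 : ∀ t ∈ S, t.card ∈ Finset.range (m+1) := by
          intro t ht
          rw [hS, Finset.mem_filter] at ht
          exact Finset.mem_range.mpr (by omega)
        rw [Finset.card_eq_sum_card_fiberwise hmap2]
        apply Finset.sum_le_sum
        intro i _
        calc (S.filter fun t => t.card = i).card ≤ (f.powersetCard i).card := by
              apply Finset.card_le_card
              intro t ht
              rw [Finset.mem_filter, hS, Finset.mem_filter, Finset.mem_powerset] at ht
              exact Finset.mem_powersetCard.mpr ⟨ht.1.1, ht.2⟩
          _ = (f.card).choose i := by rw [Finset.card_powersetCard]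

private lemma nat_le_div8 (x δ : ℕ) : ((x : ℝ) ≤ (δ : ℝ) / 8) ↔ x ≤ δ / 8 := by
  rw [le_div_iff₀ (by norm_num : (0:ℝ) < 8), Nat.le_div_iff_mul_le (by norm_num : 0 < 8)]
  exact_mod_cast Iff.rfl

private lemma card_biased_le {δ : ℕ} (f : Finset V) (hf : f.card = δ) :
    (Finset.univ.filter fun c : V → Bool => Biased18 δ c f).card
      ≤ 2 * (∑ i ∈ Finset.range (δ/8+1), δ.choose i) * 2 ^ (Fintype.card V - δ) := by
  classical
  have hsub : (Finset.univ.filter fun c : V → Bool => Biased18 δ c f) ⊆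
      (Finset.univ.filter fun c : V → Bool => (f.filter fun v => c v = true).card ≤ δ/8)
      ∪ (Finset.univ.filter fun c : V → Bool => (f.filter fun v => c v = false).card ≤ δ/8) := by
    intro c hc
    rw [Finset.mem_filter] at hc
    rcases hc.2 with h | h
    · exact Finset.mem_union_left _ (Finset.mem_filter.mpr
        ⟨Finset.mem_univ _, (nat_le_div8 _ _).mp h⟩)
    · exact Finset.mem_union_right _ (Finset.mem_filter.mpr
        ⟨Finset.mem_univ _, (nat_le_div8 _ _).mp h⟩)
  apply le_trans (Finset.card_le_card hsub)
  apply le_trans (Finset.card_union_le _ _)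
  have h1 := card_biasedSide_le f true (δ/8)
  have h2 := card_biasedSide_le f false (δ/8)
  rw [hf] at h1 h2
  have heq : (∑ i ∈ Finset.range (δ/8+1), δ.choose i) * 2 ^ (Fintype.card V - δ)
      + (∑ i ∈ Finset.range (δ/8+1), δ.choose i) * 2 ^ (Fintype.card V - δ)
      = 2 * (∑ i ∈ Finset.range (δ/8+1), δ.choose i) * 2 ^ (Fintype.card V - δ) := by ring
  exact le_trans (Nat.add_le_add h1 h2) (le_of_eq heq)

private lemma card_indep (f : Finset V) (P Q : (V → Bool) → Prop)
    (hP : ∀ c c' : V → Bool, (∀ v ∈ f, c v = c' v) → P c → P c')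
    (hQ : ∀ c c' : V → Bool, (∀ v ∉ f, c v = c' v) → Q c → Q c') :
    (Finset.univ.filter fun c => P c ∧ Q c).card * 2 ^ Fintype.card V
      = (Finset.univ.filter P).card * (Finset.univ.filter Q).card := by
  classical
  have h2V : (2 : ℕ) ^ Fintype.card V = (Finset.univ : Finset (V → Bool)).card := by
    rw [Finset.card_univ, Fintype.card_fun, Fintype.card_bool]
  rw [h2V, ← Finset.card_product, ← Finset.card_product]
  apply Finset.card_bij'
    (i := fun (p : (V → Bool) × (V → Bool)) _ =>
      ((fun v => if v ∈ f then p.1 v else p.2 v), (fun v => if v ∈ f then p.2 v else p.1 v)))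
    (j := fun (p : (V → Bool) × (V → Bool)) _ =>
      ((fun v => if v ∈ f then p.1 v else p.2 v), (fun v => if v ∈ f then p.2 v else p.1 v)))
  · intro p hp
    rw [Finset.mem_product] at hp ⊢
    obtain ⟨hp1, -⟩ := hp
    rw [Finset.mem_filter] at hp1
    obtain ⟨-, hPc, hQc⟩ := hp1
    constructor
    · refine Finset.mem_filter.mpr ⟨Finset.mem_univ _, ?_⟩
      exact hP p.1 _ (fun v hv => by simp [hv]) hPc
    · refine Finset.mem_filter.mpr ⟨Finset.mem_univ _, ?_⟩
      exact hQ p.1 _ (fun v hv => by simp [hv]) hQc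
  · intro p hp
    rw [Finset.mem_product] at hp ⊢
    obtain ⟨hp1, hp2⟩ := hp
    rw [Finset.mem_filter] at hp1 hp2
    constructor
    · refine Finset.mem_filter.mpr ⟨Finset.mem_univ _, ?_, ?_⟩
      · exact hP p.1 _ (fun v hv => by simp [hv]) hp1.2
      · exact hQ p.2 _ (fun v hv => by simp [hv]) hp2.2
    · exact Finset.mem_univ _
  · intro p hp
    ext v <;> by_cases hv : v ∈ f <;> simp [hv]
  · intro p hp
    ext v <;> by_cases hv : v ∈ f <;> simp [hv]

end Coloring

section Binom

private lemma sum_choose_le (δ : ℕ) :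
    ((∑ i ∈ Finset.range (δ/8+1), δ.choose i : ℕ) : ℝ)
      ≤ 8 ^ (δ/8) * (8/7 : ℝ) ^ δ := by
  set m := δ/8 with hm
  have hmδ : m ≤ δ := Nat.div_le_self δ 8
  set x : ℝ := 1/8 with hx
  set y : ℝ := 7/8 with hy
  have hxy : x + y = 1 := by norm_num
  have key : ∀ i ∈ Finset.range (m+1),
      (δ.choose i : ℝ) * (x ^ m * y ^ (δ - m)) ≤ (δ.choose i : ℝ) * (x ^ i * y ^ (δ - i)) := by
    intro i hi
    rw [Finset.mem_range] at hi
    have him : i ≤ m := by omega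
    apply mul_le_mul_of_nonneg_left _ (by positivity)
    have e1 : x ^ m = x ^ i * x ^ (m - i) := by rw [← pow_add]; congr 1; omega
    have e2 : y ^ (δ - i) = y ^ (m - i) * y ^ (δ - m) := by rw [← pow_add]; congr 1; omega
    rw [e1, e2]
    have hxyp : x ^ (m - i) ≤ y ^ (m - i) :=
      pow_le_pow_left₀ (by norm_num) (by norm_num) _
    calc x ^ i * x ^ (m-i) * y ^ (δ-m) ≤ x ^ i * y ^ (m-i) * y ^ (δ-m) := by
          apply mul_le_mul_of_nonneg_right _ (by positivity)
          exact mul_le_mul_of_nonneg_left hxyp (by positivity)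
      _ = x ^ i * (y ^ (m-i) * y ^ (δ-m)) := by ring
  have hsum1 : ∑ i ∈ Finset.range (m+1), (δ.choose i : ℝ) * (x ^ i * y ^ (δ - i)) ≤ 1 := by
    have hbin : ∑ i ∈ Finset.range (δ+1), (δ.choose i : ℝ) * (x ^ i * y ^ (δ - i)) = 1 := by
      have haw := add_pow x y δ
      rw [hxy, one_pow] at haw
      conv_rhs => rw [haw]
      exact Finset.sum_congr rfl (fun i _ => by ring)
    rw [← hbin]
    apply Finset.sum_le_sum_of_subset_of_nonneg
    · intro i hi
      rw [Finset.mem_range] at hi ⊢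
      omega
    · intro i _ _
      positivity
  have hsum2 : (∑ i ∈ Finset.range (m+1), (δ.choose i : ℝ)) * (x ^ m * y ^ (δ - m)) ≤ 1 := by
    rw [Finset.sum_mul]
    exact le_trans (Finset.sum_le_sum key) hsum1
  have hpos : (0:ℝ) < x ^ m * y ^ (δ - m) := by positivity
  have hinv : (8:ℝ)^m * (8/7:ℝ)^(δ-m) * (x ^ m * y ^ (δ - m)) = 1 := by
    have e1 : (8:ℝ)^m * x^m = 1 := by rw [← mul_pow]; norm_num
    have e2 : (8/7:ℝ)^(δ-m) * y^(δ-m) = 1 := by rw [← mul_pow]; norm_num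
    calc (8:ℝ)^m * (8/7:ℝ)^(δ-m) * (x ^ m * y ^ (δ - m))
        = ((8:ℝ)^m * x^m) * ((8/7:ℝ)^(δ-m) * y^(δ-m)) := by ring
      _ = 1 := by rw [e1, e2, mul_one]
  have hfin : (∑ i ∈ Finset.range (m+1), (δ.choose i : ℝ))
      ≤ (8:ℝ)^m * (8/7:ℝ)^(δ-m) :=
    (mul_le_mul_iff_left₀ hpos).mp (hsum2.trans_eq hinv.symm)
  have hlast : (8:ℝ)^m * (8/7:ℝ)^(δ-m) ≤ (8:ℝ)^m * (8/7:ℝ)^δ := by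
    apply mul_le_mul_of_nonneg_left _ (by positivity)
    exact pow_le_pow_right₀ (by norm_num) (by omega)
  push_cast
  exact le_trans (le_trans (le_of_eq rfl) hfin) hlast

private lemma beta_le {δ : ℕ} (hδ : 1 ≤ δ) :
    ((2 * ∑ i ∈ Finset.range (δ/8+1), δ.choose i : ℕ) : ℝ) / 2^δ
      ≤ (2:ℝ) ^ ((1:ℝ) - (17/40) * δ) := by
  have hS := sum_choose_le δ
  set m := δ/8 with hm
  have hmr : (m:ℝ) ≤ (δ:ℝ)/8 := by
    rw [le_div_iff₀ (by norm_num : (0:ℝ) < 8)]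
    exact_mod_cast Nat.div_mul_le_self δ 8
  have h8 : (8:ℝ)^m ≤ (2:ℝ) ^ ((3/8:ℝ) * δ) := by
    have e : (8:ℝ)^m = (2:ℝ) ^ ((3*m : ℕ) : ℝ) := by
      rw [Real.rpow_natCast, pow_mul]; norm_num
    rw [e]
    apply Real.rpow_le_rpow_of_exponent_le one_le_two
    push_cast
    linarith
  have h87 : (8/7:ℝ)^δ ≤ (2:ℝ) ^ ((1/5:ℝ) * δ) := by
    have h1 : (8/7:ℝ) ≤ (2:ℝ) ^ ((1/5:ℝ)) := by
      have h2 : ((8/7:ℝ))^(5:ℕ) ≤ ((2:ℝ) ^ ((1/5:ℝ)))^(5:ℕ) := by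
        rw [← Real.rpow_natCast ((2:ℝ) ^ ((1/5:ℝ))) 5, ← Real.rpow_mul (by norm_num)]
        norm_num
      exact le_of_pow_le_pow_left₀ (by norm_num) (by positivity) h2
    calc (8/7:ℝ)^δ ≤ ((2:ℝ) ^ ((1/5:ℝ)))^δ := pow_le_pow_left₀ (by norm_num) h1 δ
      _ = (2:ℝ) ^ ((1/5:ℝ) * δ) := by
          rw [← Real.rpow_natCast ((2:ℝ) ^ ((1/5:ℝ))) δ, ← Real.rpow_mul (by norm_num)]
  have hnum : ((2 * ∑ i ∈ Finset.range (m+1), δ.choose i : ℕ) : ℝ)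
      ≤ (2:ℝ) ^ ((1:ℝ) + (3/8:ℝ) * δ + (1/5:ℝ) * δ) := by
    push_cast
    calc (2:ℝ) * (∑ i ∈ Finset.range (m+1), (δ.choose i:ℝ))
        ≤ 2 * ((8:ℝ)^m * (8/7:ℝ)^δ) := by
          apply mul_le_mul_of_nonneg_left _ (by norm_num)
          push_cast at hS
          exact hS
      _ ≤ 2 * ((2:ℝ) ^ ((3/8:ℝ) * δ) * (2:ℝ) ^ ((1/5:ℝ) * δ)) := by
          apply mul_le_mul_of_nonneg_left _ (by norm_num)
          apply mul_le_mul h8 h87 (by positivity) (by positivity)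
      _ = (2:ℝ) ^ ((1:ℝ) + (3/8:ℝ) * δ + (1/5:ℝ) * δ) := by
          rw [Real.rpow_add (by norm_num), Real.rpow_add (by norm_num), Real.rpow_one]
          ring
  have hden : ((2:ℝ))^δ = (2:ℝ) ^ ((δ:ℕ) : ℝ) := (Real.rpow_natCast 2 δ).symm
  rw [hden, div_le_iff₀ (by positivity)]
  rw [← Real.rpow_add (by norm_num)]
  apply le_trans hnum
  apply Real.rpow_le_rpow_of_exponent_le one_le_two
  ring_nf
  linarith

end Binom

section AllBiased

variable {V : Type} [Fintype V] [DecidableEq V]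

private lemma biased_congr {δ : ℕ} (g : Finset V) (c c' : V → Bool)
    (hag : ∀ v ∈ g, c v = c' v) (hb : Biased18 δ c g) : Biased18 δ c' g := by
  have ht : g.filter (fun v => c v = true) = g.filter (fun v => c' v = true) :=
    Finset.filter_congr (fun v hv => by rw [hag v hv])
  have hf : g.filter (fun v => c v = false) = g.filter (fun v => c' v = false) :=
    Finset.filter_congr (fun v hv => by rw [hag v hv])
  rcases hb with h | h
  · left; rwa [← ht]
  · right; rwa [← hf]

private lemma card_allBiased_le {N δ : ℕ}
    (E : Fin N → Finset V) (hcard : ∀ i, (E i).card = δ)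
    (β : ℝ) (hβ0 : 0 ≤ β)
    (hβ : ∀ i : Fin N, ((Finset.univ.filter fun c : V → Bool => Biased18 δ c (E i)).card : ℝ)
      ≤ β * 2 ^ Fintype.card V) :
    ∀ T : Finset (Fin N), (∀ x ∈ T, ∀ y ∈ T, x ≠ y → Disjoint (E x) (E y)) →
    ((Finset.univ.filter fun c : V → Bool => ∀ i ∈ T, Biased18 δ c (E i)).card : ℝ)
      ≤ β ^ T.card * 2 ^ Fintype.card V := by
  intro T
  induction T using Finset.induction_on with
  | empty =>
    intro _
    have : (Finset.univ.filter fun c : V → Bool => ∀ i ∈ (∅ : Finset (Fin N)),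
        Biased18 δ c (E i)) = Finset.univ := by
      apply Finset.filter_true_of_mem
      intro c _ i hi
      exact absurd hi (Finset.notMem_empty i)
    rw [this, Finset.card_univ, Fintype.card_fun, Fintype.card_bool]
    simp
  | @insert i₀ T hi₀ ih =>
    intro hdisj
    have hdisjT : ∀ x ∈ T, ∀ y ∈ T, x ≠ y → Disjoint (E x) (E y) := by
      intro x hx y hy
      exact hdisj x (Finset.mem_insert_of_mem hx) y (Finset.mem_insert_of_mem hy)
    have hQ := ih hdisjT
    have hind := card_indep (E i₀) (fun c => Biased18 δ c (E i₀))
      (fun c => ∀ i ∈ T, Biased18 δ c (E i))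
      (fun c c' hag h => biased_congr _ c c' hag h)
      (fun c c' hag h i hi => by
        apply biased_congr (E i) c c' _ (h i hi)
        intro v hv
        apply hag
        have hne : i ≠ i₀ := fun he => hi₀ (he ▸ hi)
        have hd := hdisj i₀ (Finset.mem_insert_self i₀ T) i (Finset.mem_insert_of_mem hi)
          (fun he => hne he.symm)
        exact fun hvf => (Finset.disjoint_left.mp hd hvf) hv)
    have hfeq2 : (Finset.univ.filter fun c : V → Bool =>
          ∀ i ∈ insert i₀ T, Biased18 δ c (E i)).card * 2 ^ Fintype.card V
        = (Finset.univ.filter fun c : V → Bool => Biased18 δ c (E i₀)).card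
          * (Finset.univ.filter fun c : V → Bool => ∀ i ∈ T, Biased18 δ c (E i)).card := by
      refine Eq.trans ?_ (Eq.trans hind ?_)
      · congr 1
        apply congrArg Finset.card
        apply Finset.ext
        intro c
        simp only [Finset.mem_filter, Finset.mem_univ, true_and, Finset.mem_insert]
        constructor
        · intro h
          exact ⟨h i₀ (Or.inl rfl), fun i hi => h i (Or.inr hi)⟩
        · rintro ⟨h1, h2⟩ i (rfl | hi)
          · exact h1
          · exact h2 i hi
      · congr 1 <;>
          exact congrArg Finset.card (Finset.ext fun c => by simp only [Finset.mem_filter])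
    have h2v : (0:ℝ) < 2 ^ Fintype.card V := by positivity
    rw [← mul_le_mul_iff_left₀ h2v]
    have hcast : ((Finset.univ.filter fun c : V → Bool =>
        ∀ i ∈ insert i₀ T, Biased18 δ c (E i)).card : ℝ) * 2 ^ Fintype.card V
        = ((Finset.univ.filter fun c : V → Bool => Biased18 δ c (E i₀)).card : ℝ)
          * ((Finset.univ.filter fun c : V → Bool => ∀ i ∈ T, Biased18 δ c (E i)).card : ℝ) := by
      exact_mod_cast congrArg (Nat.cast : ℕ → ℝ) hfeq2
    rw [hcast, Finset.card_insert_of_notMem hi₀]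
    calc ((Finset.univ.filter fun c : V → Bool => Biased18 δ c (E i₀)).card : ℝ)
          * ((Finset.univ.filter fun c : V → Bool => ∀ i ∈ T, Biased18 δ c (E i)).card : ℝ)
        ≤ (β * 2 ^ Fintype.card V) * (β ^ T.card * 2 ^ Fintype.card V) := by
          apply mul_le_mul (hβ i₀) hQ (by positivity) (by positivity)
      _ = β ^ (T.card + 1) * 2 ^ Fintype.card V * 2 ^ Fintype.card V := by ring
end AllBiased

set_option maxHeartbeats 1000000 in
/-- For a `δ`-uniform hypergraph with `N` hyperedges, each intersecting at most
`d < 2^{δ/500}` others (`δ` sufficiently large): under a uniform random 2-coloring with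
bias threshold `δ/8`, with probability at least `1/2` every connected 2,3-component of
biased hyperedges has size at most `log(2N)/(c·δ)` for an absolute constant `c > 0`. -/
theorem stmt_6 :
    ∃ c : ℝ, 0 < c ∧ ∃ δ₀ : ℕ, ∀ (δ N d : ℕ), δ₀ ≤ δ →
    ∀ (V : Type) [Fintype V] [DecidableEq V] (E : Fin N → Finset V),
    (∀ i, (E i).card = δ) →
    (∀ i : Fin N, Nat.card {j : Fin N // j ≠ i ∧ ¬ Disjoint (E i) (E j)} ≤ d) →
    ((d : ℝ) < 2 ^ ((δ : ℝ) / 500)) →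
    (1 : ℝ) / 2 ≤
      (((Finset.univ : Finset (V → Bool)).filter fun col =>
          ∀ T : Finset (Fin N), IsConn23 E T → (∀ i ∈ T, Biased18 δ col (E i)) →
            (T.card : ℝ) ≤ Real.logb 2 (2 * N) / (c * δ)).card : ℝ)
        / 2 ^ (Fintype.card V) := by
  refine ⟨1/10, by norm_num, 1000, ?_⟩
  intro δ N d hδ V _ _ E hcard hdeg hd
  classical
  have hδ1 : 1 ≤ δ := by omega
  have h2V : (0:ℝ) < 2 ^ Fintype.card V := by positivity
  set K : ℝ := Real.logb 2 (2 * N) / ((1/10 : ℝ) * δ) with hK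
  set p : (V → Bool) → Prop := fun col =>
    ∀ T : Finset (Fin N), IsConn23 E T → (∀ i ∈ T, Biased18 δ col (E i)) →
      (T.card : ℝ) ≤ K with hp
  rcases Nat.eq_zero_or_pos N with hN | hN
  · -- trivial case N = 0
    subst hN
    have hall : (Finset.univ.filter p) = Finset.univ := by
      apply Finset.filter_true_of_mem
      intro col _ T _ _
      have hTe : T = ∅ := Finset.eq_empty_of_forall_notMem (fun x _ => x.elim0)
      rw [hTe]
      simp only [Finset.card_empty, Nat.cast_zero, hK]
      rw [mul_zero, Real.logb_zero, zero_div]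
    rw [hall, Finset.card_univ, Fintype.card_fun, Fintype.card_bool]
    rw [Nat.cast_pow, Nat.cast_ofNat, div_self (ne_of_gt h2V)]
    norm_num
  · -- main case N ≥ 1
    have hN2 : (2:ℝ) ≤ 2 * N := by
      have : (1:ℝ) ≤ N := by exact_mod_cast hN
      linarith
    have hK0 : 0 ≤ K := by
      apply div_nonneg
      · exact Real.logb_nonneg (by norm_num) (by linarith)
      · positivity
    -- the bad set
    set bad := Finset.univ.filter (fun col => ¬ p col) with hbad
    -- β and its bound
    set S : ℕ := ∑ i ∈ Finset.range (δ/8+1), δ.choose i with hSdef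
    set β : ℝ := ((2 * S : ℕ) : ℝ) / 2^δ with hβdef
    have hβ0 : 0 ≤ β := by positivity
    have hβle : β ≤ (2:ℝ) ^ ((1:ℝ) - (17/40) * δ) := beta_le hδ1
    have hβ2V : ∀ i : Fin N,
        ((Finset.univ.filter fun c : V → Bool => Biased18 δ c (E i)).card : ℝ)
          ≤ β * 2 ^ Fintype.card V := by
      intro i
      have hδV : δ ≤ Fintype.card V := by
        rw [← hcard i]
        exact Finset.card_le_univ (E i)
      have h1 := card_biased_le (E i) (hcard i)
      calc ((Finset.univ.filter fun c : V → Bool => Biased18 δ c (E i)).card : ℝ)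
          ≤ ((2 * S * 2 ^ (Fintype.card V - δ) : ℕ) : ℝ) := Nat.cast_le.mpr h1
        _ = ((2*S : ℕ) : ℝ) * (2:ℝ) ^ (Fintype.card V - δ) := by push_cast; ring
        _ = β * 2 ^ Fintype.card V := by
            rw [hβdef, div_mul_eq_mul_div]
            rw [eq_div_iff (by positivity : ((2:ℝ)^δ) ≠ 0)]
            have he : Fintype.card V - δ + δ = Fintype.card V := by omega
            rw [mul_assoc, ← pow_add, he]
    have hAB := card_allBiased_le E hcard β hβ0 hβ2V
    -- the family of bad components
    set 𝒯 : Finset (Finset (Fin N)) :=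
      Finset.univ.filter (fun T => IsConn23 E T ∧ K < (T.card : ℝ)) with h𝒯
    have hsubbad : bad ⊆ 𝒯.biUnion (fun T =>
        Finset.univ.filter fun col => ∀ i ∈ T, Biased18 δ col (E i)) := by
      intro col hcol
      have hcol2 : ¬ (∀ T : Finset (Fin N), IsConn23 E T →
          (∀ i ∈ T, Biased18 δ col (E i)) → (T.card:ℝ) ≤ K) := by
        have := (Finset.mem_filter.mp hcol).2
        exact this
      push_neg at hcol2
      obtain ⟨T, hT1, hT2, hT3⟩ := hcol2
      refine Finset.mem_biUnion.mpr ⟨T, ?_, ?_⟩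
      · exact Finset.mem_filter.mpr ⟨Finset.mem_univ _, hT1, hT3⟩
      · exact Finset.mem_filter.mpr ⟨Finset.mem_univ _, hT2⟩
    have hbadle1 : (bad.card : ℝ) ≤
        ∑ T ∈ 𝒯, ((Finset.univ.filter fun col => ∀ i ∈ T, Biased18 δ col (E i)).card : ℝ) := by
      have := le_trans (Finset.card_le_card hsubbad) Finset.card_biUnion_le
      exact_mod_cast this
    have hbadle2 : (bad.card : ℝ) ≤ (∑ T ∈ 𝒯, β ^ T.card) * 2 ^ Fintype.card V := by
      rw [Finset.sum_mul]
      refine le_trans hbadle1 (Finset.sum_le_sum ?_)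
      intro T hT
      rw [h𝒯, Finset.mem_filter] at hT
      exact hAB T hT.2.1.1
    -- bound the sum over 𝒯
    -- q bound
    set q : ℝ := (2:ℝ) ^ (-(2/5 : ℝ) * δ) with hq
    have hq0 : 0 < q := Real.rpow_pos_of_pos (by norm_num) _
    have hqhalf : q ≤ 1/2 := by
      rw [hq]
      have : ((2:ℝ)) ^ (-(1:ℝ)) = 1/2 := by
        rw [Real.rpow_neg_one]; norm_num
      rw [← this]
      apply Real.rpow_le_rpow_of_exponent_le one_le_two
      have : (1000:ℝ) ≤ δ := by exact_mod_cast hδ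
      linarith
    have hq1 : q ≤ 1 := le_trans hqhalf (by norm_num)
    have hdq : ((d:ℝ) + 1) ^ 6 * β ≤ q := by
      have h1 : (1:ℝ) ≤ (2:ℝ) ^ ((δ:ℝ)/500) := Real.one_le_rpow (by norm_num) (by positivity)
      have hd1 : ((d:ℝ) + 1) ≤ (2:ℝ) ^ ((δ:ℝ)/500 + 1) := by
        rw [Real.rpow_add (by norm_num), Real.rpow_one]
        nlinarith [hd.le]
      have hd6 : ((d:ℝ) + 1) ^ 6 ≤ (2:ℝ) ^ (6 * ((δ:ℝ)/500 + 1)) := by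
        calc ((d:ℝ) + 1) ^ 6 ≤ ((2:ℝ) ^ ((δ:ℝ)/500 + 1)) ^ 6 :=
              pow_le_pow_left₀ (by positivity) hd1 6
          _ = (2:ℝ) ^ (((δ:ℝ)/500 + 1) * 6) := by
              rw [← Real.rpow_natCast ((2:ℝ) ^ ((δ:ℝ)/500 + 1)) 6,
                ← Real.rpow_mul (by norm_num)]
              norm_num
          _ = (2:ℝ) ^ (6 * ((δ:ℝ)/500 + 1)) := by rw [mul_comm]
      calc ((d:ℝ) + 1) ^ 6 * β
          ≤ (2:ℝ) ^ (6 * ((δ:ℝ)/500 + 1)) * (2:ℝ) ^ ((1:ℝ) - (17/40) * δ) := by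
            apply mul_le_mul hd6 hβle hβ0 (by positivity)
        _ = (2:ℝ) ^ (6 * ((δ:ℝ)/500 + 1) + ((1:ℝ) - (17/40) * δ)) := by
            rw [← Real.rpow_add (by norm_num)]
        _ ≤ q := by
            rw [hq]
            apply Real.rpow_le_rpow_of_exponent_le one_le_two
            have hδr : (1000:ℝ) ≤ δ := by exact_mod_cast hδ
            linarith
    -- sum over 𝒯 is at most 1/2
    have hTsum : (∑ T ∈ 𝒯, β ^ T.card) ≤ 1/2 := by
      have hmaps : ∀ T ∈ 𝒯, T.card ∈ Finset.range (N+1) := by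
        intro T _
        rw [Finset.mem_range]
        have := Finset.card_le_univ T
        simp only [Finset.card_univ, Fintype.card_fin] at this
        omega
      rw [← Finset.sum_fiberwise_of_maps_to hmaps]
      set m : ℕ := Nat.floor K + 1 with hm
      have hmK : K < m := by
        rw [hm]
        push_cast
        exact Nat.lt_floor_add_one K
      have hinner : ∀ k ∈ Finset.range (N+1),
          (∑ T ∈ 𝒯.filter (fun T => T.card = k), β ^ T.card)
            ≤ (if m ≤ k then (N:ℝ) * q ^ k else 0) := by
        intro k hk
        by_cases hKk : m ≤ k
        · rw [if_pos hKk]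
          have hk1 : 1 ≤ k := by omega
          -- count the fiber
          have hce : (𝒯.filter (fun T => T.card = k)).card
              = ((Finset.univ : Finset (Finset (Fin N))).filter
                  (fun T => (IsConn23 E T ∧ K < (T.card:ℝ)) ∧ T.card = k)).card := by
            apply congrArg Finset.card
            apply Finset.ext
            intro T
            rw [h𝒯]
            simp only [Finset.mem_filter, Finset.mem_univ, true_and, and_assoc]
          have hcount := card_conn23_le E hdeg (fun T => K < (T.card:ℝ)) hk1
          rw [← hce] at hcount
          calc (∑ T ∈ 𝒯.filter (fun T => T.card = k), β ^ T.card)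
              = (𝒯.filter (fun T => T.card = k)).card * β ^ k := by
                rw [Finset.sum_congr rfl (fun T hT => by
                  rw [(Finset.mem_filter.mp hT).2])]
                rw [Finset.sum_const, nsmul_eq_mul]
            _ ≤ ((N * (d+1)^(6*k) : ℕ) : ℝ) * β ^ k := by
                apply mul_le_mul_of_nonneg_right _ (by positivity)
                exact_mod_cast hcount
            _ ≤ (N:ℝ) * q ^ k := by
                push_cast
                rw [mul_assoc]
                apply mul_le_mul_of_nonneg_left _ (by positivity)
                calc ((d:ℝ)+1)^(6*k) * β ^ k = (((d:ℝ)+1)^6 * β) ^ k := by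
                      rw [mul_pow, ← pow_mul]
                  _ ≤ q ^ k := pow_le_pow_left₀ (by positivity) hdq k
        · rw [if_neg hKk]
          have hempty : 𝒯.filter (fun T => T.card = k) = ∅ := by
            apply Finset.filter_eq_empty_iff.mpr
            intro T hT
            rw [h𝒯, Finset.mem_filter] at hT
            intro hcardk
            have hKk2 : K < (k:ℝ) := by
              have := hT.2.2
              rwa [hcardk] at this
            have hkfl : k ≤ Nat.floor K := by omega
            have hkle : (k:ℝ) ≤ K := by
              calc (k:ℝ) ≤ (Nat.floor K : ℝ) := by exact_mod_cast hkfl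
                _ ≤ K := Nat.floor_le hK0
            linarith
          rw [hempty]
          simp
      calc ∑ k ∈ Finset.range (N+1), (∑ T ∈ 𝒯.filter (fun T => T.card = k), β ^ T.card)
          ≤ ∑ k ∈ Finset.range (N+1), (if m ≤ k then (N:ℝ) * q ^ k else 0) :=
            Finset.sum_le_sum hinner
        _ = ∑ k ∈ (Finset.range (N+1)).filter (fun k => m ≤ k), (N:ℝ) * q ^ k :=
            (Finset.sum_filter _ _).symm
        _ ≤ 1/2 := by
            have himg : (Finset.range (N+1)).filter (fun k => m ≤ k)
                = (Finset.range (N+1-m)).image (fun j => m + j) := by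
              apply Finset.ext
              intro k
              simp only [Finset.mem_filter, Finset.mem_range, Finset.mem_image]
              constructor
              · rintro ⟨h1, h2⟩
                exact ⟨k - m, by omega, by omega⟩
              · rintro ⟨j, hj, rfl⟩
                omega
            rw [himg, Finset.sum_image (fun a _ b _ h => by omega)]
            have hsum2 : ∑ j ∈ Finset.range (N+1-m), (N:ℝ) * q ^ (m + j)
                = (N:ℝ) * q ^ m * ∑ j ∈ Finset.range (N+1-m), q ^ j := by
              rw [Finset.mul_sum]
              apply Finset.sum_congr rfl
              intro j _
              rw [pow_add]
              ring
            rw [hsum2]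
            have hgeo : ∑ j ∈ Finset.range (N+1-m), q ^ j ≤ 2 := by
              calc ∑ j ∈ Finset.range (N+1-m), q ^ j
                  ≤ ∑ j ∈ Finset.range (N+1-m), (1/2:ℝ) ^ j :=
                    Finset.sum_le_sum (fun j _ => pow_le_pow_left₀ hq0.le hqhalf j)
                _ ≤ 2 := sum_geometric_two_le _
            have hqm : q ^ m ≤ (2*(N:ℝ))^(-(4:ℝ)) := by
              have h1 : q ^ m = q ^ ((m:ℕ):ℝ) := (Real.rpow_natCast q m).symm
              have h2 : q ^ ((m:ℕ):ℝ) ≤ q ^ K :=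
                Real.rpow_le_rpow_of_exponent_ge hq0 hq1 hmK.le
              have h3 : q ^ K = (2*(N:ℝ))^(-(4:ℝ)) := by
                rw [hq, ← Real.rpow_mul (by norm_num : (0:ℝ) ≤ 2)]
                have hδne : (δ:ℝ) ≠ 0 := Nat.cast_ne_zero.mpr (by omega)
                have hexp : -(2/5:ℝ)*(δ:ℝ) * K = Real.logb 2 (2*(N:ℝ)) * (-(4:ℝ)) := by
                  rw [hK]
                  field_simp
                  ring
                rw [hexp, Real.rpow_mul (by norm_num : (0:ℝ) ≤ 2),
                  Real.rpow_logb (by norm_num) (by norm_num) (by linarith)]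
              rw [h1]
              rw [h3] at h2
              exact h2
            have h2N : (2:ℝ) ≤ 2*(N:ℝ) := hN2
            have hfinal : (N:ℝ) * (2*(N:ℝ))^(-(4:ℝ)) * 2 ≤ 1/2 := by
              have hpos : (0:ℝ) < 2*(N:ℝ) := by linarith
              have hneg : (2*(N:ℝ))^(-(4:ℝ)) = ((2*(N:ℝ))^(4:ℕ))⁻¹ := by
                rw [← Real.rpow_natCast (2*(N:ℝ)) 4, ← Real.rpow_neg hpos.le]
                norm_num
              rw [hneg]
              have hkey : (N:ℝ) * ((2*(N:ℝ))^(4:ℕ))⁻¹ * 2 = (2*(N:ℝ)) / (2*(N:ℝ))^(4:ℕ) := by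
                field_simp
              rw [hkey, div_le_iff₀ (by positivity)]
              have h8 : (8:ℝ) ≤ (2*(N:ℝ))^(3:ℕ) := by
                calc (8:ℝ) = 2^(3:ℕ) := by norm_num
                  _ ≤ (2*(N:ℝ))^(3:ℕ) := pow_le_pow_left₀ (by norm_num) h2N 3
              have h9 : (2*(N:ℝ))^(4:ℕ) = (2*(N:ℝ)) * (2*(N:ℝ))^(3:ℕ) := by ring
              rw [h9]
              have h10 : (2*(N:ℝ)) * 8 ≤ (2*(N:ℝ)) * (2*(N:ℝ))^(3:ℕ) :=
                mul_le_mul_of_nonneg_left h8 hpos.le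
              linarith only [h10, hpos]
            calc (N:ℝ) * q ^ m * ∑ j ∈ Finset.range (N+1-m), q ^ j
                ≤ (N:ℝ) * q ^ m * 2 := by
                  apply mul_le_mul_of_nonneg_left hgeo (by positivity)
              _ ≤ (N:ℝ) * (2*(N:ℝ))^(-(4:ℝ)) * 2 := by
                  apply mul_le_mul_of_nonneg_right _ (by norm_num)
                  exact mul_le_mul_of_nonneg_left hqm (by positivity)
              _ ≤ 1/2 := hfinal
    -- conclude
    have hbadhalf : (bad.card : ℝ) ≤ 1/2 * 2 ^ Fintype.card V := by
      refine le_trans hbadle2 ?_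
      exact mul_le_mul_of_nonneg_right hTsum h2V.le
    have hcompl : (Finset.univ.filter p).card + bad.card = 2 ^ Fintype.card V := by
      rw [hbad]
      rw [Finset.card_filter_add_card_filter_not]
      rw [Finset.card_univ, Fintype.card_fun, Fintype.card_bool]
    rw [le_div_iff₀ h2V]
    have hcastc : ((Finset.univ.filter p).card : ℝ) + (bad.card : ℝ) = 2 ^ Fintype.card V := by
      exact_mod_cast congrArg (Nat.cast : ℕ → ℝ) hcompl
    linarith
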